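/- Suppose E[t_e²] < ∞, d ≥ 2, and μ({0}) < p_c(d). Then there is a constant C > 0 such that for all n ≥ 1, |Var(T_n) − Var(F_n)| ≤ C·n^{3/4}. -/

import Mathlib

open MeasureTheory ProbabilityTheory Real Filter
open scoped ENNReal

namespace FPP

/-- Vertices of the lattice `ℤ^d`. -/
abbrev Vertex (d : ℕ) := Fin d → ℤ

/-- Nearest-neighbor edges of `ℤ^d`: the edge `(v, i)` joins `v` and `v + eᵢ`. -/
abbrev Edge (d : ℕ) := (Fin d → ℤ) × Fin d

/-- The `i`-th standard basis vector of `ℤ^d`. -/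
def unitVec (d : ℕ) (i : Fin d) : Vertex d := fun j => if j = i then 1 else 0

/-- Take one step from `v` in direction `s.1`, forwards if `s.2 = true`, else backwards. -/
def step {d : ℕ} (v : Vertex d) (s : Fin d × Bool) : Vertex d :=
  if s.2 then v + unitVec d s.1 else v - unitVec d s.1

/-- The (undirected, canonically oriented) edge traversed by the step `s` from `v`. -/
def stepEdge {d : ℕ} (v : Vertex d) (s : Fin d × Bool) : Edge d :=
  if s.2 then (v, s.1) else (v - unitVec d s.1, s.1)

/-- Endpoint of the lattice path started at `v` with steps `p`. -/
def pathEnd {d : ℕ} (v : Vertex d) : List (Fin d × Bool) → Vertex d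
  | [] => v
  | s :: rest => pathEnd (step v s) rest

/-- The list of edges traversed by the lattice path started at `v` with steps `p`. -/
def pathEdges {d : ℕ} (v : Vertex d) : List (Fin d × Bool) → List (Edge d)
  | [] => []
  | s :: rest => stepEdge v s :: pathEdges (step v s) rest

/-- The list of vertices visited by the lattice path started at `v` with steps `p`. -/
def pathVertices {d : ℕ} (v : Vertex d) : List (Fin d × Bool) → List (Vertex d)
  | [] => [v]
  | s :: rest => v :: pathVertices (step v s) rest

/-- The passage time of a lattice path: the sum of the weights of its edges. -/
def pathTime {d : ℕ} (t : Edge d → ℝ) (v : Vertex d) (p : List (Fin d × Bool)) : ℝ :=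
  ((pathEdges v p).map t).sum

/-- The first-passage time `T(x,y)`: infimum over lattice paths from `x` to `y`
of the sum of the edge weights along the path. -/
noncomputable def passageTime {d : ℕ} (t : Edge d → ℝ) (x y : Vertex d) : ℝ :=
  sInf {r | ∃ p : List (Fin d × Bool), pathEnd x p = y ∧ pathTime t x p = r}

/-- The point `n·e₁ ∈ ℤ^d`. -/
def target (d n : ℕ) : Vertex d := fun j => if (j : ℕ) = 0 then (n : ℤ) else 0

/-- The set of geodesics (time-minimizing lattice paths) from `x` to `y`. -/
noncomputable def geodesics {d : ℕ} (t : Edge d → ℝ) (x y : Vertex d) :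
    Set (List (Fin d × Bool)) :=
  {p | pathEnd x p = y ∧ pathTime t x p = passageTime t x y}

/-- The intersection of (the edge sets of) all geodesics from `x` to `y`. -/
noncomputable def geoInter {d : ℕ} (t : Edge d → ℝ) (x y : Vertex d) : Set (Edge d) :=
  {e | ∀ p ∈ geodesics t x y, e ∈ pathEdges x p}

/-- The cluster of the origin in a bond percolation configuration `ω`:
all vertices joined to `0` by a path of open edges. -/
def openCluster {d : ℕ} (ω : Edge d → Bool) : Set (Vertex d) :=
  {x | ∃ p : List (Fin d × Bool), pathEnd 0 p = x ∧ ∀ e ∈ pathEdges 0 p, ω e = true}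

/-- The critical probability `p_c(d)` of i.i.d. Bernoulli bond percolation on `ℤ^d`:
the supremum of those `p ∈ [0,1]` such that for any i.i.d. Bernoulli(p) family of
edge variables, the open cluster of the origin is almost surely finite. -/
noncomputable def pc (d : ℕ) : ℝ :=
  sSup {p : ℝ | 0 ≤ p ∧ p ≤ 1 ∧
    ∀ (Ω : Type) (_ : MeasureSpace Ω), IsProbabilityMeasure (ℙ : Measure Ω) →
      ∀ X : Edge d → Ω → Bool,
        iIndepFun X ℙ →
        (∀ e, ℙ {ω | X e ω = true} = ENNReal.ofReal p) →
        ℙ {ω | (openCluster fun e => X e ω).Infinite} = 0}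

/-- The passage time `T_n = T(0, n e₁)` as a function of the environment. -/
noncomputable def Tn {d : ℕ} (t : Edge d → Ω → ℝ) (n : ℕ) (ω : Ω) : ℝ :=
  passageTime (fun e => t e ω) 0 (target d n)


/-- The ℓ¹-ball `B_m = {x ∈ ℤ^d : ‖x‖₁ ≤ m}`, as a finset. -/
noncomputable def ballOne (d m : ℕ) : Finset (Vertex d) :=
  (Fintype.piFinset fun _ : Fin d => Finset.Icc (-(m : ℤ)) (m : ℤ)).filter
    (fun x => ∑ i, |x i| ≤ (m : ℤ))

/-- The averaged passage time
`F_n = (1/#B_m) ∑_{z ∈ B_m} T(z, z + n e₁)` with `m = ⌈n^{1/4}⌉`. -/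
noncomputable def Fn {d : ℕ} {Ω : Type} (t : Edge d → Ω → ℝ) (n : ℕ) (ω : Ω) : ℝ :=
  ((ballOne d ⌈(n : ℝ) ^ (1 / 4 : ℝ)⌉₊).card : ℝ)⁻¹ *
    ∑ z ∈ ballOne d ⌈(n : ℝ) ^ (1 / 4 : ℝ)⌉₊,
      passageTime (fun e => t e ω) z (z + target d n)

/-! ### auxiliary -/
variable {d : ℕ}

def eshift (z : Vertex d) (e : Edge d) : Edge d := (e.1 + z, e.2)

lemma eshift_injective (z : Vertex d) : Function.Injective (eshift z) := by
  intro a b h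
  simp only [eshift, Prod.mk.injEq] at h
  exact Prod.ext (by have := h.1; exact add_right_cancel this) h.2

lemma pathTime_nil (t : Edge d → ℝ) (v : Vertex d) : pathTime t v ([] : List (Fin d × Bool)) = 0 := rfl

lemma pathTime_cons (t : Edge d → ℝ) (v : Vertex d) (s : Fin d × Bool) (p : List (Fin d × Bool)) :
    pathTime t v (s :: p) = t (stepEdge v s) + pathTime t (step v s) p := by
  simp [pathTime, pathEdges]

lemma pathEnd_append (v : Vertex d) (p q : List (Fin d × Bool)) :
    pathEnd v (p ++ q) = pathEnd (pathEnd v p) q := by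
  induction p generalizing v with
  | nil => rfl
  | cons s rest ih => simp [pathEnd, ih]

lemma pathEdges_append (v : Vertex d) (p q : List (Fin d × Bool)) :
    pathEdges v (p ++ q) = pathEdges v p ++ pathEdges (pathEnd v p) q := by
  induction p generalizing v with
  | nil => rfl
  | cons s rest ih => simp [pathEdges, pathEnd, ih]

lemma pathTime_append (t : Edge d → ℝ) (v : Vertex d) (p q : List (Fin d × Bool)) :
    pathTime t v (p ++ q) = pathTime t v p + pathTime t (pathEnd v p) q := by
  simp [pathTime, pathEdges_append]

lemma step_add (v z : Vertex d) (s : Fin d × Bool) : step (v + z) s = step v s + z := by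
  rcases s with ⟨i, b⟩
  cases b <;> simp [step] <;> abel

lemma stepEdge_add (v z : Vertex d) (s : Fin d × Bool) :
    stepEdge (v + z) s = eshift z (stepEdge v s) := by
  rcases s with ⟨i, b⟩
  cases b <;> simp [stepEdge, eshift] <;> abel

lemma pathEnd_add (v z : Vertex d) (p : List (Fin d × Bool)) :
    pathEnd (v + z) p = pathEnd v p + z := by
  induction p generalizing v with
  | nil => rfl
  | cons s rest ih => simp [pathEnd, step_add, ih]

lemma pathEdges_add (v z : Vertex d) (p : List (Fin d × Bool)) :
    pathEdges (v + z) p = (pathEdges v p).map (eshift z) := by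
  induction p generalizing v with
  | nil => rfl
  | cons s rest ih => simp [pathEdges, stepEdge_add, step_add, ih]

lemma pathTime_shift (t : Edge d → ℝ) (v z : Vertex d) (p : List (Fin d × Bool)) :
    pathTime t (v + z) p = pathTime (fun e => t (eshift z e)) v p := by
  simp [pathTime, pathEdges_add, List.map_map, Function.comp_def]

lemma pathTime_shift0 (t : Edge d → ℝ) (z : Vertex d) (p : List (Fin d × Bool)) :
    pathTime t z p = pathTime (fun e => t (eshift z e)) 0 p := by
  have := pathTime_shift t 0 z p
  rwa [zero_add] at this

lemma pathEnd_zero_add (z : Vertex d) (p : List (Fin d × Bool)) :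
    pathEnd z p = pathEnd 0 p + z := by
  have := pathEnd_add 0 z p
  rwa [zero_add] at this

/-! ### stepsTo -/

def dirSteps (i : Fin d) (a : ℤ) : List (Fin d × Bool) :=
  List.replicate a.natAbs (i, decide (0 ≤ a))

def stepsTo (u : Vertex d) : List (Fin d × Bool) :=
  (List.finRange d).flatMap fun i => dirSteps i (u i)

lemma pathEnd_replicate (v : Vertex d) (k : ℕ) (i : Fin d) (b : Bool) :
    pathEnd v (List.replicate k (i, b)) = v + (cond b (k : ℤ) (-(k : ℤ))) • unitVec d i := by
  induction k generalizing v with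
  | zero => cases b <;> simp [pathEnd]
  | succ k ih =>
    rw [List.replicate_succ]
    simp only [pathEnd, ih]
    cases b <;> simp [step, add_smul, one_smul] <;> abel

lemma pathEnd_dirSteps (v : Vertex d) (i : Fin d) (a : ℤ) :
    pathEnd v (dirSteps i a) = v + a • unitVec d i := by
  rw [dirSteps, pathEnd_replicate]
  rcases le_or_gt 0 a with h | h
  · simp [h, Int.natAbs_of_nonneg h]
  · have h' : (decide (0 ≤ a)) = false := decide_eq_false (not_le.2 h)
    have ha : (-(a.natAbs:ℤ)) = a := by omega
    rw [h', Bool.cond_false, ha]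

lemma pathEnd_flatMap (v : Vertex d) (u : Vertex d) (l : List (Fin d)) :
    pathEnd v (l.flatMap fun i => dirSteps i (u i)) =
      v + (l.map fun i => u i • unitVec d i).sum := by
  induction l generalizing v with
  | nil => simp [pathEnd]
  | cons i rest ih =>
    rw [List.flatMap_cons, pathEnd_append, pathEnd_dirSteps, ih]
    simp [add_assoc]

lemma pathEnd_stepsTo (v u : Vertex d) : pathEnd v (stepsTo u) = v + u := by
  rw [stepsTo, pathEnd_flatMap]
  congr 1
  have h1 : ((List.finRange d).map fun i => u i • unitVec d i).sum
      = ∑ i : Fin d, u i • unitVec d i := by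
    rw [Fin.sum_univ_def]
  rw [h1]
  funext j
  simp only [Finset.sum_apply, Pi.smul_apply, unitVec, smul_eq_mul]
  rw [Finset.sum_eq_single j]
  · simp
  · intro i _ hne
    simp [Ne.symm hne]
  · simp

lemma length_pathEdges (v : Vertex d) (p : List (Fin d × Bool)) :
    (pathEdges v p).length = p.length := by
  induction p generalizing v with
  | nil => rfl
  | cons s rest ih => simp [pathEdges, ih]

lemma length_stepsTo (u : Vertex d) : (stepsTo u).length = ∑ i, (u i).natAbs := by
  rw [stepsTo]
  rw [List.length_flatMap]
  simp [dirSteps, Fin.sum_univ_def, Function.comp_def]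



def PTset (t : Edge d → ℝ) (x y : Vertex d) : Set ℝ :=
  {r | ∃ p : List (Fin d × Bool), pathEnd x p = y ∧ pathTime t x p = r}

lemma passageTime_eq_sInf (t : Edge d → ℝ) (x y : Vertex d) :
    passageTime t x y = sInf (PTset t x y) := rfl

lemma PTset_nonempty (t : Edge d → ℝ) (x y : Vertex d) : (PTset t x y).Nonempty :=
  ⟨pathTime t x (stepsTo (y - x)), stepsTo (y - x),
    by rw [pathEnd_stepsTo]; abel, rfl⟩

lemma pathTime_nonneg {t : Edge d → ℝ} (ht : ∀ e, 0 ≤ t e) (x : Vertex d)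
    (p : List (Fin d × Bool)) : 0 ≤ pathTime t x p := by
  apply List.sum_nonneg
  intro r hr
  rcases List.mem_map.1 hr with ⟨e, _, rfl⟩
  exact ht e

lemma PTset_bddBelow {t : Edge d → ℝ} (ht : ∀ e, 0 ≤ t e) (x y : Vertex d) :
    BddBelow (PTset t x y) :=
  ⟨0, by rintro r ⟨p, _, rfl⟩; exact pathTime_nonneg ht x p⟩

lemma passageTime_le_pathTime {t : Edge d → ℝ} (ht : ∀ e, 0 ≤ t e) {x y : Vertex d}
    {p : List (Fin d × Bool)} (hp : pathEnd x p = y) :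
    passageTime t x y ≤ pathTime t x p :=
  csInf_le (PTset_bddBelow ht x y) ⟨p, hp, rfl⟩

lemma passageTime_nonneg {t : Edge d → ℝ} (ht : ∀ e, 0 ≤ t e) (x y : Vertex d) :
    0 ≤ passageTime t x y :=
  le_csInf (PTset_nonempty t x y) (by rintro r ⟨p, _, rfl⟩; exact pathTime_nonneg ht x p)

lemma passageTime_triangle {t : Edge d → ℝ} (ht : ∀ e, 0 ≤ t e) (x y z : Vertex d) :
    passageTime t x z ≤ passageTime t x y + passageTime t y z := by
  have key : ∀ q : List (Fin d × Bool), pathEnd y q = z →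
      passageTime t x z ≤ passageTime t x y + pathTime t y q := by
    intro q hq
    have h1 : passageTime t x z - pathTime t y q ≤ passageTime t x y := by
      apply le_csInf (PTset_nonempty t x y)
      rintro r ⟨p, hp, rfl⟩
      have hend : pathEnd x (p ++ q) = z := by rw [pathEnd_append, hp, hq]
      have := passageTime_le_pathTime ht hend
      rw [pathTime_append, hp] at this
      linarith
    linarith
  have h2 : passageTime t x z - passageTime t x y ≤ passageTime t y z := by
    apply le_csInf (PTset_nonempty t y z)
    rintro r ⟨q, hq, rfl⟩
    have := key q hq
    linarith
  linarith


/-! ### minimizing sequence -/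
section
variable {d : ℕ}

noncomputable def minTime (g : Edge d → ℝ) (f : ℕ → List (Fin d × Bool)) (z : Vertex d) :
    ℕ → ℝ
  | 0 => pathTime g z (f 0)
  | (k+1) => min (minTime g f z k) (pathTime g z (f (k+1)))

lemma minTime_zero (g : Edge d → ℝ) (f : ℕ → List (Fin d × Bool)) (z : Vertex d) :
    minTime g f z 0 = pathTime g z (f 0) := rfl

lemma minTime_succ (g : Edge d → ℝ) (f : ℕ → List (Fin d × Bool)) (z : Vertex d) (k : ℕ) :
    minTime g f z (k+1) = min (minTime g f z k) (pathTime g z (f (k+1))) := rfl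

lemma minTime_antitone (g : Edge d → ℝ) (f : ℕ → List (Fin d × Bool)) (z : Vertex d) :
    Antitone (minTime g f z) := by
  apply antitone_nat_of_succ_le
  intro k
  rw [minTime_succ]
  exact min_le_left _ _

lemma minTime_le_pathTime (g : Edge d → ℝ) (f : ℕ → List (Fin d × Bool)) (z : Vertex d)
    (k : ℕ) : minTime g f z k ≤ pathTime g z (f k) := by
  cases k with
  | zero => exact le_of_eq (minTime_zero g f z)
  | succ k => rw [minTime_succ]; exact min_le_right _ _

lemma minTime_le_first (g : Edge d → ℝ) (f : ℕ → List (Fin d × Bool)) (z : Vertex d)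
    (k : ℕ) : minTime g f z k ≤ pathTime g z (f 0) :=
  (minTime_antitone g f z (Nat.zero_le k)).trans_eq (minTime_zero g f z)

lemma minTime_nonneg {g : Edge d → ℝ} (ht : ∀ e, 0 ≤ g e) (f : ℕ → List (Fin d × Bool))
    (z : Vertex d) (k : ℕ) : 0 ≤ minTime g f z k := by
  induction k with
  | zero => exact pathTime_nonneg ht z (f 0)
  | succ k ih => rw [minTime_succ]; exact le_min ih (pathTime_nonneg ht z (f (k+1)))

lemma PTset_eq_range (g : Edge d → ℝ) {f : ℕ → List (Fin d × Bool)} {τ : Vertex d}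
    (hf : {p : List (Fin d × Bool) | pathEnd 0 p = τ} = Set.range f) (z : Vertex d) :
    PTset g z (z + τ) = Set.range (fun k => pathTime g z (f k)) := by
  ext r
  constructor
  · rintro ⟨p, hp, rfl⟩
    have hp0 : pathEnd 0 p = τ := by
      rw [pathEnd_zero_add] at hp
      have : pathEnd 0 p + z = τ + z := by rw [hp]; abel
      exact add_right_cancel this
    have : p ∈ Set.range f := hf ▸ hp0
    rcases this with ⟨k, rfl⟩
    exact ⟨k, rfl⟩
  · rintro ⟨k, rfl⟩
    have : f k ∈ {p : List (Fin d × Bool) | pathEnd 0 p = τ} := by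
      rw [hf]; exact ⟨k, rfl⟩
    refine ⟨f k, ?_, rfl⟩
    rw [pathEnd_zero_add, this]
    abel

lemma passageTime_le_minTime {g : Edge d → ℝ} (ht : ∀ e, 0 ≤ g e)
    {f : ℕ → List (Fin d × Bool)} {τ : Vertex d}
    (hf : {p : List (Fin d × Bool) | pathEnd 0 p = τ} = Set.range f) (z : Vertex d) (k : ℕ) :
    passageTime g z (z + τ) ≤ minTime g f z k := by
  have hmem : ∀ j, pathEnd z (f j) = z + τ := by
    intro j
    have : f j ∈ {p : List (Fin d × Bool) | pathEnd 0 p = τ} := by rw [hf]; exact ⟨j, rfl⟩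
    rw [pathEnd_zero_add, this]; abel
  induction k with
  | zero => exact (passageTime_le_pathTime ht (hmem 0)).trans_eq (minTime_zero g f z).symm
  | succ k ih =>
    rw [minTime_succ]
    exact le_min ih (passageTime_le_pathTime ht (hmem (k+1)))

lemma tendsto_minTime {g : Edge d → ℝ} (ht : ∀ e, 0 ≤ g e)
    {f : ℕ → List (Fin d × Bool)} {τ : Vertex d}
    (hf : {p : List (Fin d × Bool) | pathEnd 0 p = τ} = Set.range f) (z : Vertex d) :
    Filter.Tendsto (minTime g f z) Filter.atTop (nhds (passageTime g z (z + τ))) := by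
  have hbdd : BddBelow (Set.range (minTime g f z)) :=
    ⟨0, by rintro r ⟨k, rfl⟩; exact minTime_nonneg ht f z k⟩
  have h1 := tendsto_atTop_ciInf (minTime_antitone g f z) hbdd
  have heq : (⨅ k, minTime g f z k) = passageTime g z (z + τ) := by
    apply le_antisymm
    · -- iInf minTime ≤ sInf (PTset) = iInf of pathTimes
      rw [passageTime_eq_sInf, PTset_eq_range g hf z]
      refine le_csInf (Set.range_nonempty _) ?_
      rintro r ⟨k, rfl⟩
      exact (ciInf_le hbdd k).trans (minTime_le_pathTime g f z k)
    · apply le_ciInf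
      intro k
      exact passageTime_le_minTime ht hf z k
  rwa [heq] at h1

end

/-! ### moment bounds for sums of edge weights -/
section

lemma memLp_mul_integrable {Ω : Type} [MeasureSpace Ω] [IsProbabilityMeasure (ℙ : Measure Ω)]
    {f g : Ω → ℝ} (hf : MemLp f 2 ℙ) (hg : MemLp g 2 ℙ) :
    Integrable (fun ω => f ω * g ω) ℙ := by
  refine Integrable.mono' ((hf.integrable_sq.add hg.integrable_sq).div_const 2)
    (hf.aestronglyMeasurable.mul hg.aestronglyMeasurable) ?_
  filter_upwards with ω
  have := sq_nonneg (|f ω| - |g ω|)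
  rw [Real.norm_eq_abs, abs_mul]
  simp only [Pi.add_apply]
  nlinarith [abs_nonneg (f ω), abs_nonneg (g ω), sq_abs (f ω), sq_abs (g ω)]

variable {d : ℕ} {Ω : Type} [MeasureSpace Ω] [IsProbabilityMeasure (ℙ : Measure Ω)]

def edgeSum (t : Edge d → Ω → ℝ) (L : List (Edge d)) (ω : Ω) : ℝ :=
  (L.map fun e => t e ω).sum

lemma edgeSum_nil (t : Edge d → Ω → ℝ) : edgeSum t ([] : List (Edge d)) = fun _ => 0 := rfl

lemma edgeSum_cons (t : Edge d → Ω → ℝ) (e : Edge d) (L : List (Edge d)) (ω : Ω) :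
    edgeSum t (e :: L) ω = t e ω + edgeSum t L ω := by simp [edgeSum]

lemma edgeSum_append (t : Edge d → Ω → ℝ) (L M : List (Edge d)) (ω : Ω) :
    edgeSum t (L ++ M) ω = edgeSum t L ω + edgeSum t M ω := by simp [edgeSum]

lemma pathTime_eq_edgeSum (t : Edge d → Ω → ℝ) (v : Vertex d) (p : List (Fin d × Bool))
    (ω : Ω) : pathTime (fun e => t e ω) v p = edgeSum t (pathEdges v p) ω := rfl

lemma memLp_edgeSum {t : Edge d → Ω → ℝ} (ht2 : ∀ e, MemLp (t e) 2 ℙ)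
    (L : List (Edge d)) : MemLp (edgeSum t L) 2 ℙ := by
  induction L with
  | nil => rw [edgeSum_nil]; exact memLp_const 0
  | cons e L ih =>
    have : edgeSum t (e :: L) = fun ω => t e ω + edgeSum t L ω := by
      funext ω; exact edgeSum_cons t e L ω
    rw [this]
    exact (ht2 e).add ih

lemma integrable_edgeSum {t : Edge d → Ω → ℝ} (ht2 : ∀ e, MemLp (t e) 2 ℙ)
    (L : List (Edge d)) : Integrable (edgeSum t L) ℙ :=
  (memLp_edgeSum ht2 L).integrable one_le_two

lemma integral_mul_le_var {t : Edge d → Ω → ℝ} (ht2 : ∀ e, MemLp (t e) 2 ℙ)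
    {σ2 : ℝ} (hσ : ∀ e, ∫ ω, (t e ω) ^ 2 ∂ℙ = σ2) (e e' : Edge d) :
    ∫ ω, t e ω * t e' ω ∂ℙ ≤ σ2 := by
  have h1 : ∫ ω, t e ω * t e' ω ∂ℙ ≤ ∫ ω, ((t e ω)^2 + (t e' ω)^2) / 2 ∂ℙ := by
    apply integral_mono (memLp_mul_integrable (ht2 e) (ht2 e'))
      (((ht2 e).integrable_sq.add (ht2 e').integrable_sq).div_const 2)
    intro ω
    simp only [Pi.add_apply]
    nlinarith [sq_nonneg (t e ω - t e' ω)]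
  have h2 : ∫ ω, ((t e ω)^2 + (t e' ω)^2) / 2 ∂ℙ = σ2 := by
    rw [integral_div, integral_add (ht2 e).integrable_sq (ht2 e').integrable_sq, hσ, hσ]
    ring
  linarith

lemma integral_mul_edgeSum_le {t : Edge d → Ω → ℝ} (ht2 : ∀ e, MemLp (t e) 2 ℙ)
    {σ2 : ℝ} (hσ : ∀ e, ∫ ω, (t e ω) ^ 2 ∂ℙ = σ2) (e : Edge d) (L : List (Edge d)) :
    ∫ ω, t e ω * edgeSum t L ω ∂ℙ ≤ (L.length : ℝ) * σ2 := by
  induction L with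
  | nil => simp [edgeSum_nil]
  | cons e' L ih =>
    have hsplit : ∀ ω, t e ω * edgeSum t (e' :: L) ω
        = t e ω * t e' ω + t e ω * edgeSum t L ω := by
      intro ω; rw [edgeSum_cons]; ring
    rw [integral_congr_ae (Filter.Eventually.of_forall hsplit),
      integral_add (memLp_mul_integrable (ht2 e) (ht2 e'))
        (memLp_mul_integrable (ht2 e) (memLp_edgeSum ht2 L))]
    have := integral_mul_le_var ht2 hσ e e'
    simp only [List.length_cons]
    push_cast
    linarith

lemma integral_sq_edgeSum_le {t : Edge d → Ω → ℝ} (ht2 : ∀ e, MemLp (t e) 2 ℙ)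
    {σ2 : ℝ} (hσ : ∀ e, ∫ ω, (t e ω) ^ 2 ∂ℙ = σ2) (hσ0 : 0 ≤ σ2) (L : List (Edge d)) :
    ∫ ω, (edgeSum t L ω) ^ 2 ∂ℙ ≤ ((L.length : ℝ)) ^ 2 * σ2 := by
  induction L with
  | nil => simp [edgeSum_nil]
  | cons e L ih =>
    have hsplit : ∀ ω, (edgeSum t (e :: L) ω) ^ 2
        = (t e ω)^2 + (2 * (t e ω * edgeSum t L ω) + (edgeSum t L ω)^2) := by
      intro ω; rw [edgeSum_cons]; ring
    rw [integral_congr_ae (Filter.Eventually.of_forall hsplit)]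
    have hmulL : Integrable (fun ω => t e ω * edgeSum t L ω) ℙ :=
      memLp_mul_integrable (ht2 e) (memLp_edgeSum ht2 L)
    have h2m : Integrable (fun ω => 2 * (t e ω * edgeSum t L ω)) ℙ := hmulL.const_mul 2
    have hsq : Integrable (fun ω => (edgeSum t L ω) ^ 2) ℙ :=
      (memLp_edgeSum ht2 L).integrable_sq
    have hsum : Integrable (fun ω => 2 * (t e ω * edgeSum t L ω) + (edgeSum t L ω) ^ 2) ℙ :=
      h2m.add hsq
    rw [integral_add (ht2 e).integrable_sq hsum, integral_add h2m hsq,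
      integral_const_mul, hσ]
    have h1 := integral_mul_edgeSum_le ht2 hσ e L
    simp only [List.length_cons]
    push_cast
    nlinarith [ih]

end

/-! ### finite-dimensional law transfer -/
section
variable {d : ℕ} {Ω : Type} [MeasureSpace Ω] [IsProbabilityMeasure (ℙ : Measure Ω)]

lemma eshift_left_inv (z : Vertex d) (e : Edge d) : eshift z (eshift (-z) e) = e := by
  simp [eshift]

lemma map_eval_eq_pi {t : Edge d → Ω → ℝ} (hmeas : ∀ e, Measurable (t e))
    (hiid : iIndepFun t ℙ)
    {μ : Measure ℝ} [IsProbabilityMeasure μ] (hdist : ∀ e, Measure.map (t e) ℙ = μ)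
    (E : Finset (Edge d)) (z : Vertex d) :
    Measure.map (fun ω (i : ↥E) => t (eshift z i.1) ω) ℙ
      = Measure.pi (fun _ : ↥E => μ) := by
  classical
  have hV : Measurable (fun ω (i : ↥E) => t (eshift z i.1) ω) :=
    measurable_pi_lambda _ fun i => hmeas _
  symm
  apply Measure.pi_eq
  intro s hs
  rw [Measure.map_apply hV (MeasurableSet.univ_pi hs)]
  let B : Edge d → Set ℝ := fun e =>
    if h : eshift (-z) e ∈ E then s ⟨eshift (-z) e, h⟩ else Set.univ
  have hBshift : ∀ (i : Edge d) (hi : i ∈ E), B (eshift z i) = s ⟨i, hi⟩ := by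
    intro i hi
    have hinv : eshift (-z) (eshift z i) = i := by simp [eshift]
    show (if h : eshift (-z) (eshift z i) ∈ E
        then s ⟨eshift (-z) (eshift z i), h⟩ else Set.univ) = s ⟨i, hi⟩
    rw [dif_pos (by rw [hinv]; exact hi)]
    exact congrArg s (Subtype.ext hinv)
  have hBmeas : ∀ e, MeasurableSet (B e) := by
    intro e
    show MeasurableSet (if h : eshift (-z) e ∈ E then s ⟨eshift (-z) e, h⟩ else Set.univ)
    split
    · exact hs _
    · exact MeasurableSet.univ
  have hpre : (fun ω (i : ↥E) => t (eshift z i.1) ω) ⁻¹' (Set.univ.pi s)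
      = ⋂ e ∈ E.image (eshift z), t e ⁻¹' (B e) := by
    ext ω
    constructor
    · intro h
      rw [Set.mem_preimage, Set.mem_pi] at h
      apply Set.mem_iInter₂.2
      intro e he
      rcases Finset.mem_image.1 he with ⟨i, hiE, rfl⟩
      rw [Set.mem_preimage, hBshift i hiE]
      exact h ⟨i, hiE⟩ (Set.mem_univ _)
    · intro h
      rw [Set.mem_preimage, Set.mem_pi]
      intro i _
      have := Set.mem_iInter₂.1 h (eshift z i.1)
        (Finset.mem_image_of_mem _ i.2)
      rw [Set.mem_preimage, hBshift i.1 i.2, Subtype.coe_eta] at this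
      exact this
  rw [hpre]
  have hsets : ∀ e ∈ E.image (eshift z),
      MeasurableSet[(inferInstance : MeasurableSpace ℝ).comap (t e)] (t e ⁻¹' B e) :=
    fun e _ => ⟨B e, hBmeas e, rfl⟩
  rw [hiid.meas_biInter hsets]
  rw [Finset.prod_image (fun a _ b _ h => eshift_injective z h)]
  rw [Finset.univ_eq_attach,
    ← Finset.prod_attach E (fun e => ℙ (t (eshift z e) ⁻¹' B (eshift z e)))]
  apply Finset.prod_congr rfl
  intro i _
  rw [hBshift i.1 i.2, Subtype.coe_eta, ← hdist (eshift z i.1),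
    Measure.map_apply (hmeas _) (hs i)]

/-! ### invariance of minTime moments -/
section
variable {d : ℕ} {Ω : Type} [MeasureSpace Ω] [IsProbabilityMeasure (ℙ : Measure Ω)]

def extendFn (E : Finset (Edge d)) (v : ↥E → ℝ) : Edge d → ℝ :=
  fun e => if h : e ∈ E then v ⟨e, h⟩ else 0

lemma measurable_extendFn_apply (E : Finset (Edge d)) (e : Edge d) :
    Measurable fun v : ↥E → ℝ => extendFn E v e := by
  unfold extendFn
  by_cases h : e ∈ E
  · simp only [dif_pos h]
    exact measurable_pi_apply _
  · simp only [dif_neg h]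
    exact measurable_const

lemma measurable_extend_pathTime (E : Finset (Edge d)) (x : Vertex d)
    (p : List (Fin d × Bool)) :
    Measurable fun v : ↥E → ℝ => pathTime (extendFn E v) x p := by
  induction p generalizing x with
  | nil => simp only [pathTime_nil]; exact measurable_const
  | cons s rest ih =>
    simp only [pathTime_cons]
    exact (measurable_extendFn_apply E _).add (ih _)

lemma measurable_extend_minTime (E : Finset (Edge d)) (f : ℕ → List (Fin d × Bool))
    (z : Vertex d) (k : ℕ) :
    Measurable fun v : ↥E → ℝ => minTime (extendFn E v) f z k := by
  induction k with
  | zero =>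
    simp only [minTime_zero]
    exact measurable_extend_pathTime E z (f 0)
  | succ k ih =>
    simp only [minTime_succ]
    exact ih.min (measurable_extend_pathTime E z (f (k+1)))

def edgesUpTo (f : ℕ → List (Fin d × Bool)) (k : ℕ) : Finset (Edge d) :=
  ((List.range (k+1)).flatMap fun j => pathEdges 0 (f j)).toFinset

lemma mem_edgesUpTo {f : ℕ → List (Fin d × Bool)} {k j : ℕ} {e : Edge d}
    (hj : j ≤ k) (he : e ∈ pathEdges (0 : Vertex d) (f j)) : e ∈ edgesUpTo f k := by
  rw [edgesUpTo, List.mem_toFinset, List.mem_flatMap]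
  exact ⟨j, List.mem_range.2 (Nat.lt_succ_of_le hj), he⟩

lemma pathTime_congr {g₁ g₂ : Edge d → ℝ} {x : Vertex d} {p : List (Fin d × Bool)}
    (h : ∀ e ∈ pathEdges x p, g₁ e = g₂ e) : pathTime g₁ x p = pathTime g₂ x p := by
  unfold pathTime
  rw [List.map_congr_left h]

lemma minTime_congr {g₁ g₂ : Edge d → ℝ} {f : ℕ → List (Fin d × Bool)} {z : Vertex d} {k : ℕ}
    (h : ∀ j ≤ k, pathTime g₁ z (f j) = pathTime g₂ z (f j)) :
    minTime g₁ f z k = minTime g₂ f z k := by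
  induction k with
  | zero => simpa only [minTime_zero] using h 0 le_rfl
  | succ k ih =>
    rw [minTime_succ, minTime_succ, ih (fun j hj => h j (hj.trans (Nat.le_succ k))),
      h (k+1) le_rfl]

lemma minTime_shift (g : Edge d → ℝ) (f : ℕ → List (Fin d × Bool)) (z : Vertex d) (k : ℕ) :
    minTime g f z k = minTime (fun e => g (eshift z e)) f 0 k := by
  induction k with
  | zero => rw [minTime_zero, minTime_zero, pathTime_shift0]
  | succ k ih => rw [minTime_succ, minTime_succ, ih, pathTime_shift0]

lemma extend_comp (t : Edge d → Ω → ℝ) (f : ℕ → List (Fin d × Bool)) (k : ℕ)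
    (z : Vertex d) (ω : Ω) :
    minTime (extendFn (edgesUpTo f k) fun i => t (eshift z i.1) ω) f 0 k
      = minTime (fun e => t e ω) f z k := by
  rw [minTime_shift (fun e => t e ω) f z k]
  apply minTime_congr
  intro j hj
  apply pathTime_congr
  intro e he
  have hmem : e ∈ edgesUpTo f k := mem_edgesUpTo hj he
  show (if h : e ∈ edgesUpTo f k then t (eshift z e) ω else 0) = t (eshift z e) ω
  rw [dif_pos hmem]

lemma integral_minTime_eq {t : Edge d → Ω → ℝ} (hmeas : ∀ e, Measurable (t e))
    (hiid : iIndepFun t ℙ)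
    {μ : Measure ℝ} [IsProbabilityMeasure μ] (hdist : ∀ e, Measure.map (t e) ℙ = μ)
    (f : ℕ → List (Fin d × Bool)) (k : ℕ) (z : Vertex d)
    (Φpost : ℝ → ℝ) (hpost : Measurable Φpost) :
    ∫ ω, Φpost (minTime (fun e => t e ω) f z k) ∂ℙ
      = ∫ ω, Φpost (minTime (fun e => t e ω) f 0 k) ∂ℙ := by
  have key : ∀ w : Vertex d, ∫ ω, Φpost (minTime (fun e => t e ω) f w k) ∂ℙ
      = ∫ v, Φpost (minTime (extendFn (edgesUpTo f k) v) f 0 k)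
          ∂(Measure.pi fun _ : ↥(edgesUpTo f k) => μ) := by
    intro w
    have hV : Measurable (fun ω (i : ↥(edgesUpTo f k)) => t (eshift w i.1) ω) :=
      measurable_pi_lambda _ fun i => hmeas _
    have hΦ : Measurable fun v : ↥(edgesUpTo f k) → ℝ =>
        Φpost (minTime (extendFn (edgesUpTo f k) v) f 0 k) :=
      hpost.comp (measurable_extend_minTime _ f 0 k)
    rw [← map_eval_eq_pi hmeas hiid hdist (edgesUpTo f k) w,
      integral_map hV.aemeasurable hΦ.aestronglyMeasurable]
    congr 1
    funext ω
    rw [extend_comp]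
  rw [key z, key 0]

end

/-! ### the random passage times -/
section
variable {d : ℕ} {Ω : Type} [MeasureSpace Ω] [IsProbabilityMeasure (ℙ : Measure Ω)]

lemma measurable_pathTime_omega {t : Edge d → Ω → ℝ} (hmeas : ∀ e, Measurable (t e))
    (x : Vertex d) (p : List (Fin d × Bool)) :
    Measurable fun ω => pathTime (fun e => t e ω) x p := by
  induction p generalizing x with
  | nil => simp only [pathTime_nil]; exact measurable_const
  | cons s rest ih =>
    simp only [pathTime_cons]
    exact (hmeas _).add (ih _)

lemma measurable_minTime_omega {t : Edge d → Ω → ℝ} (hmeas : ∀ e, Measurable (t e))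
    (f : ℕ → List (Fin d × Bool)) (z : Vertex d) (k : ℕ) :
    Measurable fun ω => minTime (fun e => t e ω) f z k := by
  induction k with
  | zero => simp only [minTime_zero]; exact measurable_pathTime_omega hmeas z (f 0)
  | succ k ih =>
    simp only [minTime_succ]
    exact ih.min (measurable_pathTime_omega hmeas z (f (k+1)))

lemma memLp_pathTime_omega {t : Edge d → Ω → ℝ} (ht2 : ∀ e, MemLp (t e) 2 ℙ)
    (x : Vertex d) (p : List (Fin d × Bool)) :
    MemLp (fun ω => pathTime (fun e => t e ω) x p) 2 ℙ := by
  have : (fun ω => pathTime (fun e => t e ω) x p) = edgeSum t (pathEdges x p) := rfl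
  rw [this]
  exact memLp_edgeSum ht2 _

lemma edgeSum_nonneg {t : Edge d → Ω → ℝ} {ω : Ω} (h : ∀ e, 0 ≤ t e ω)
    (L : List (Edge d)) : 0 ≤ edgeSum t L ω := by
  apply List.sum_nonneg
  intro r hr
  rcases List.mem_map.1 hr with ⟨e, _, rfl⟩
  exact h e

section Xz

variable {t : Edge d → Ω → ℝ} {μ : Measure ℝ} [IsProbabilityMeasure μ]
  {f : ℕ → List (Fin d × Bool)} {τ : Vertex d}

lemma ae_nonneg (hmeas : ∀ e, Measurable (t e)) (hdist : ∀ e, Measure.map (t e) ℙ = μ)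
    (hnonneg : μ (Set.Iio 0) = 0) : ∀ᵐ ω ∂ℙ, ∀ e : Edge d, 0 ≤ t e ω := by
  rw [ae_all_iff]
  intro e
  have : ℙ {ω | t e ω < 0} = 0 := by
    have : {ω | t e ω < 0} = t e ⁻¹' (Set.Iio 0) := rfl
    rw [this, ← Measure.map_apply (hmeas e) measurableSet_Iio, hdist e, hnonneg]
  filter_upwards [measure_eq_zero_iff_ae_notMem.1 this] with ω hω
  simpa using not_lt.1 hω

lemma pathEnd_enum (hf : {p : List (Fin d × Bool) | pathEnd 0 p = τ} = Set.range f)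
    (z : Vertex d) (j : ℕ) : pathEnd z (f j) = z + τ := by
  have : f j ∈ {p : List (Fin d × Bool) | pathEnd 0 p = τ} := by rw [hf]; exact ⟨j, rfl⟩
  rw [pathEnd_zero_add, this]
  abel

lemma ae_tendsto_X (hmeas : ∀ e, Measurable (t e)) (hdist : ∀ e, Measure.map (t e) ℙ = μ)
    (hnonneg : μ (Set.Iio 0) = 0)
    (hf : {p : List (Fin d × Bool) | pathEnd 0 p = τ} = Set.range f) (z : Vertex d) :
    ∀ᵐ ω ∂ℙ, Filter.Tendsto (fun k => minTime (fun e => t e ω) f z k) Filter.atTop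
      (nhds (passageTime (fun e => t e ω) z (z + τ))) := by
  filter_upwards [ae_nonneg hmeas hdist hnonneg] with ω hω
  exact tendsto_minTime hω hf z

lemma aemeasurable_X (hmeas : ∀ e, Measurable (t e)) (hdist : ∀ e, Measure.map (t e) ℙ = μ)
    (hnonneg : μ (Set.Iio 0) = 0)
    (hf : {p : List (Fin d × Bool) | pathEnd 0 p = τ} = Set.range f) (z : Vertex d) :
    AEMeasurable (fun ω => passageTime (fun e => t e ω) z (z + τ)) ℙ :=
  aemeasurable_of_tendsto_metrizable_ae _
    (fun k => (measurable_minTime_omega hmeas f z k).aemeasurable)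
    (ae_tendsto_X hmeas hdist hnonneg hf z)

lemma memLp_X (hmeas : ∀ e, Measurable (t e)) (ht2 : ∀ e, MemLp (t e) 2 ℙ)
    (hdist : ∀ e, Measure.map (t e) ℙ = μ) (hnonneg : μ (Set.Iio 0) = 0)
    (hf : {p : List (Fin d × Bool) | pathEnd 0 p = τ} = Set.range f) (z : Vertex d) :
    MemLp (fun ω => passageTime (fun e => t e ω) z (z + τ)) 2 ℙ := by
  apply MemLp.of_le (memLp_pathTime_omega ht2 z (f 0))
    (aemeasurable_X hmeas hdist hnonneg hf z).aestronglyMeasurable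
  filter_upwards [ae_nonneg hmeas hdist hnonneg] with ω hω
  rw [Real.norm_eq_abs, Real.norm_eq_abs]
  have h0 : 0 ≤ passageTime (fun e => t e ω) z (z + τ) := passageTime_nonneg hω z (z + τ)
  have hle : passageTime (fun e => t e ω) z (z + τ) ≤ pathTime (fun e => t e ω) z (f 0) :=
    passageTime_le_pathTime hω (pathEnd_enum hf z 0)
  rw [abs_of_nonneg h0]
  exact hle.trans (le_abs_self _)

lemma integral_X_eq (hmeas : ∀ e, Measurable (t e)) (ht2 : ∀ e, MemLp (t e) 2 ℙ)
    (hiid : iIndepFun t ℙ)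
    (hdist : ∀ e, Measure.map (t e) ℙ = μ) (hnonneg : μ (Set.Iio 0) = 0)
    (hf : {p : List (Fin d × Bool) | pathEnd 0 p = τ} = Set.range f) (z : Vertex d) :
    ∫ ω, passageTime (fun e => t e ω) z (z + τ) ∂ℙ
      = ∫ ω, passageTime (fun e => t e ω) 0 (0 + τ) ∂ℙ := by
  have hdom : ∀ w : Vertex d, Filter.Tendsto
      (fun k => ∫ ω, minTime (fun e => t e ω) f w k ∂ℙ) Filter.atTop
      (nhds (∫ ω, passageTime (fun e => t e ω) w (w + τ) ∂ℙ)) := by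
    intro w
    apply tendsto_integral_of_dominated_convergence
      (fun ω => |pathTime (fun e => t e ω) w (f 0)|)
      (fun k => (measurable_minTime_omega hmeas f w k).aestronglyMeasurable)
      ((memLp_pathTime_omega ht2 w (f 0)).integrable one_le_two).abs
    · intro k
      filter_upwards [ae_nonneg hmeas hdist hnonneg] with ω hω
      rw [Real.norm_eq_abs, abs_of_nonneg (minTime_nonneg hω f w k)]
      exact (minTime_le_first _ f w k).trans (le_abs_self _)
    · exact ae_tendsto_X hmeas hdist hnonneg hf w
  have heq : ∀ k, ∫ ω, minTime (fun e => t e ω) f z k ∂ℙ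
      = ∫ ω, minTime (fun e => t e ω) f 0 k ∂ℙ :=
    fun k => integral_minTime_eq hmeas hiid hdist f k z id measurable_id
  have h1 := hdom z
  rw [show (fun k => ∫ ω, minTime (fun e => t e ω) f z k ∂ℙ)
      = (fun k => ∫ ω, minTime (fun e => t e ω) f 0 k ∂ℙ) from funext heq] at h1
  exact tendsto_nhds_unique h1 (hdom 0)

lemma integral_X_sq_eq (hmeas : ∀ e, Measurable (t e)) (ht2 : ∀ e, MemLp (t e) 2 ℙ)
    (hiid : iIndepFun t ℙ)
    (hdist : ∀ e, Measure.map (t e) ℙ = μ) (hnonneg : μ (Set.Iio 0) = 0)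
    (hf : {p : List (Fin d × Bool) | pathEnd 0 p = τ} = Set.range f) (z : Vertex d) :
    ∫ ω, (passageTime (fun e => t e ω) z (z + τ)) ^ 2 ∂ℙ
      = ∫ ω, (passageTime (fun e => t e ω) 0 (0 + τ)) ^ 2 ∂ℙ := by
  have hdom : ∀ w : Vertex d, Filter.Tendsto
      (fun k => ∫ ω, (minTime (fun e => t e ω) f w k) ^ 2 ∂ℙ) Filter.atTop
      (nhds (∫ ω, (passageTime (fun e => t e ω) w (w + τ)) ^ 2 ∂ℙ)) := by
    intro w
    apply tendsto_integral_of_dominated_convergence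
      (fun ω => (pathTime (fun e => t e ω) w (f 0)) ^ 2)
      (fun k => ((measurable_minTime_omega hmeas f w k).pow_const 2).aestronglyMeasurable)
      (memLp_pathTime_omega ht2 w (f 0)).integrable_sq
    · intro k
      filter_upwards [ae_nonneg hmeas hdist hnonneg] with ω hω
      rw [Real.norm_eq_abs, abs_of_nonneg (sq_nonneg _)]
      have h0 := minTime_nonneg hω f w k
      have h1 := minTime_le_first (fun e => t e ω) f w k
      nlinarith
    · filter_upwards [ae_tendsto_X hmeas hdist hnonneg hf w] with ω hω
      exact (continuous_pow 2).continuousAt.tendsto.comp hω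
  have heq : ∀ k, ∫ ω, (minTime (fun e => t e ω) f z k) ^ 2 ∂ℙ
      = ∫ ω, (minTime (fun e => t e ω) f 0 k) ^ 2 ∂ℙ :=
    fun k => integral_minTime_eq hmeas hiid hdist f k z (fun x => x ^ 2)
      (measurable_id.pow_const 2)
  have h1 := hdom z
  rw [show (fun k => ∫ ω, (minTime (fun e => t e ω) f z k) ^ 2 ∂ℙ)
      = (fun k => ∫ ω, (minTime (fun e => t e ω) f 0 k) ^ 2 ∂ℙ) from funext heq] at h1
  exact tendsto_nhds_unique h1 (hdom 0)

lemma integral_sq_diff_le (hmeas : ∀ e, Measurable (t e)) (ht2 : ∀ e, MemLp (t e) 2 ℙ)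
    (hdist : ∀ e, Measure.map (t e) ℙ = μ) (hnonneg : μ (Set.Iio 0) = 0)
    (hf : {p : List (Fin d × Bool) | pathEnd 0 p = τ} = Set.range f)
    {σ2 : ℝ} (hσ : ∀ e, ∫ ω, (t e ω) ^ 2 ∂ℙ = σ2) (hσ0 : 0 ≤ σ2) (z w : Vertex d) :
    ∫ ω, (passageTime (fun e => t e ω) z (z + τ)
        - passageTime (fun e => t e ω) w (w + τ)) ^ 2 ∂ℙ
      ≤ ((((pathEdges z (stepsTo (w - z)) ++ pathEdges (w + τ) (stepsTo (z - w))
          ++ pathEdges w (stepsTo (z - w)) ++ pathEdges (z + τ) (stepsTo (w - z)))).length : ℝ)) ^ 2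
        * σ2 := by
  set L : List (Edge d) := pathEdges z (stepsTo (w - z)) ++ pathEdges (w + τ) (stepsTo (z - w))
    ++ pathEdges w (stepsTo (z - w)) ++ pathEdges (z + τ) (stepsTo (w - z)) with hL
  have habs : ∀ᵐ ω ∂ℙ, |passageTime (fun e => t e ω) z (z + τ)
      - passageTime (fun e => t e ω) w (w + τ)| ≤ edgeSum t L ω := by
    filter_upwards [ae_nonneg hmeas hdist hnonneg] with ω hω
    set g := fun e => t e ω with hg
    have e1 : pathEnd z (stepsTo (w - z)) = w := by rw [pathEnd_stepsTo]; abel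
    have e2 : pathEnd (w + τ) (stepsTo (z - w)) = z + τ := by rw [pathEnd_stepsTo]; abel
    have e3 : pathEnd w (stepsTo (z - w)) = z := by rw [pathEnd_stepsTo]; abel
    have e4 : pathEnd (z + τ) (stepsTo (w - z)) = w + τ := by rw [pathEnd_stepsTo]; abel
    have S1 : passageTime g z w ≤ edgeSum t (pathEdges z (stepsTo (w - z))) ω :=
      passageTime_le_pathTime hω e1
    have S2 : passageTime g (w + τ) (z + τ) ≤ edgeSum t (pathEdges (w + τ) (stepsTo (z - w))) ω :=
      passageTime_le_pathTime hω e2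
    have S3 : passageTime g w z ≤ edgeSum t (pathEdges w (stepsTo (z - w))) ω :=
      passageTime_le_pathTime hω e3
    have S4 : passageTime g (z + τ) (w + τ) ≤ edgeSum t (pathEdges (z + τ) (stepsTo (w - z))) ω :=
      passageTime_le_pathTime hω e4
    have tri1 : passageTime g z (z + τ) ≤ passageTime g z w
        + (passageTime g w (w + τ) + passageTime g (w + τ) (z + τ)) :=
      (passageTime_triangle hω z w (z + τ)).trans
        (by have := passageTime_triangle hω w (w + τ) (z + τ); linarith)
    have tri2 : passageTime g w (w + τ) ≤ passageTime g w z
        + (passageTime g z (z + τ) + passageTime g (z + τ) (w + τ)) :=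
      (passageTime_triangle hω w z (w + τ)).trans
        (by have := passageTime_triangle hω z (z + τ) (w + τ); linarith)
    have hn1 : 0 ≤ edgeSum t (pathEdges z (stepsTo (w - z))) ω := edgeSum_nonneg hω _
    have hn2 : 0 ≤ edgeSum t (pathEdges (w + τ) (stepsTo (z - w))) ω := edgeSum_nonneg hω _
    have hn3 : 0 ≤ edgeSum t (pathEdges w (stepsTo (z - w))) ω := edgeSum_nonneg hω _
    have hn4 : 0 ≤ edgeSum t (pathEdges (z + τ) (stepsTo (w - z))) ω := edgeSum_nonneg hω _
    have hLsum : edgeSum t L ω = edgeSum t (pathEdges z (stepsTo (w - z))) ω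
        + edgeSum t (pathEdges (w + τ) (stepsTo (z - w))) ω
        + edgeSum t (pathEdges w (stepsTo (z - w))) ω
        + edgeSum t (pathEdges (z + τ) (stepsTo (w - z))) ω := by
      rw [hL, edgeSum_append, edgeSum_append, edgeSum_append]
    rw [abs_le]
    constructor <;> [skip; skip] <;> rw [hLsum] <;> linarith
  have hXz := memLp_X hmeas ht2 hdist hnonneg hf z
  have hXw := memLp_X hmeas ht2 hdist hnonneg hf w
  have hsub : MemLp (fun ω => passageTime (fun e => t e ω) z (z + τ)
      - passageTime (fun e => t e ω) w (w + τ)) 2 ℙ := hXz.sub hXw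
  have hmono : ∫ ω, (passageTime (fun e => t e ω) z (z + τ)
      - passageTime (fun e => t e ω) w (w + τ)) ^ 2 ∂ℙ
      ≤ ∫ ω, (edgeSum t L ω) ^ 2 ∂ℙ := by
    apply integral_mono_ae hsub.integrable_sq (memLp_edgeSum ht2 L).integrable_sq
    filter_upwards [habs] with ω hω
    have := abs_le.1 hω
    nlinarith [this.1, this.2]
  exact hmono.trans (integral_sq_edgeSum_le ht2 hσ hσ0 L)

end Xz
end


/-! ### final theorem -/
section

lemma zero_mem_ballOne (d m : ℕ) : (0 : Vertex d) ∈ ballOne d m := by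
  rw [ballOne, Finset.mem_filter]
  constructor
  · rw [Fintype.mem_piFinset]
    intro i
    rw [Finset.mem_Icc]
    constructor
    · simp
    · simp
  · simp

lemma sum_natAbs_le {d m : ℕ} {z : Vertex d} (hz : z ∈ ballOne d m) :
    ∑ i, (z i).natAbs ≤ m := by
  rw [ballOne, Finset.mem_filter] at hz
  have h := hz.2
  have : ((∑ i, (z i).natAbs : ℕ) : ℤ) ≤ (m : ℤ) := by
    push_cast
    exact h
  exact_mod_cast this

lemma sum_natAbs_sub_le {d m : ℕ} {z w : Vertex d} (hz : z ∈ ballOne d m)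
    (hw : w ∈ ballOne d m) : ∑ i, ((w - z) i).natAbs ≤ 2 * m := by
  calc ∑ i, ((w - z) i).natAbs ≤ ∑ i, ((w i).natAbs + (z i).natAbs) := by
        apply Finset.sum_le_sum
        intro i _
        have : (w - z) i = w i - z i := rfl
        rw [this]
        exact Int.natAbs_sub_le (w i) (z i)
    _ = (∑ i, (w i).natAbs) + ∑ i, (z i).natAbs := Finset.sum_add_distrib
    _ ≤ m + m := Nat.add_le_add (sum_natAbs_le hw) (sum_natAbs_le hz)
    _ = 2 * m := by ring

set_option maxHeartbeats 1000000 in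
/-- **Variance approximation by the averaged passage time.**
Suppose `E[t_e²] < ∞`, `d ≥ 2` and `μ({0}) < p_c(d)`. Then there is a constant `C > 0`
such that `|Var(T_n) − Var(F_n)| ≤ C n^{3/4}` for all `n ≥ 1`. -/
theorem variance_averaged_approximation
    {d : ℕ} (hd : 2 ≤ d)
    {Ω : Type} [MeasureSpace Ω] [IsProbabilityMeasure (ℙ : Measure Ω)]
    (μ : Measure ℝ) [IsProbabilityMeasure μ]
    (t : Edge d → Ω → ℝ)
    (hmeas : ∀ e, Measurable (t e))
    (hiid : iIndepFun t ℙ)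
    (hdist : ∀ e, Measure.map (t e) ℙ = μ)
    (hnonneg : μ (Set.Iio 0) = 0)
    (hpc : μ {0} < ENNReal.ofReal (pc d))
    (hL2 : Integrable (fun x => x ^ 2) μ) :
    ∃ C > (0 : ℝ), ∀ n : ℕ, 1 ≤ n →
      |variance (Tn t n) ℙ - variance (Fn t n) ℙ| ≤ C * (n : ℝ) ^ (3 / 4 : ℝ) := by
  classical
  set σ2 : ℝ := ∫ x, x ^ 2 ∂μ with hσ2def
  have hσ2_0 : 0 ≤ σ2 := integral_nonneg fun x => sq_nonneg x
  refine ⟨128 * σ2 + 1, by positivity, ?_⟩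
  intro n hn
  -- moment facts about the weights
  have ht2 : ∀ e, MemLp (t e) 2 ℙ := by
    intro e
    have hid : MemLp (id : ℝ → ℝ) 2 μ :=
      (memLp_two_iff_integrable_sq aestronglyMeasurable_id).2 (by simpa using hL2)
    rw [← hdist e] at hid
    have := (memLp_map_measure_iff aestronglyMeasurable_id (hmeas e).aemeasurable).1 hid
    simpa [Function.comp] using this
  have hσ : ∀ e, ∫ ω, (t e ω) ^ 2 ∂ℙ = σ2 := by
    intro e
    have := integral_map (φ := t e) (μ := ℙ) (hmeas e).aemeasurable
      (f := fun x : ℝ => x ^ 2) (measurable_id.pow_const 2).aestronglyMeasurable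
    rw [hσ2def, ← hdist e, this]
  -- enumeration of paths to the target
  set τ : Vertex d := target d n with hτdef
  have hPne : ({p : List (Fin d × Bool) | pathEnd 0 p = τ} : Set _).Nonempty :=
    ⟨stepsTo τ, by rw [Set.mem_setOf_eq, pathEnd_stepsTo, zero_add]⟩
  obtain ⟨f, hf⟩ := (Set.to_countable _).exists_eq_range hPne
  -- notation
  set m : ℕ := ⌈(n : ℝ) ^ (1 / 4 : ℝ)⌉₊ with hmdef
  set B : Finset (Vertex d) := ballOne d m with hBdef
  set N : ℕ := B.card with hNdef
  have hN0 : 0 < N := Finset.card_pos.2 ⟨0, zero_mem_ballOne d m⟩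
  have hNr : ((N : ℝ)) ≠ 0 := Nat.cast_ne_zero.2 hN0.ne'
  set c : ℝ := ((N : ℝ))⁻¹ with hcdef
  have hX2 : ∀ z : Vertex d, MemLp (fun ω => passageTime (fun e => t e ω) z (z + τ)) 2 ℙ :=
    fun z => memLp_X hmeas ht2 hdist hnonneg hf z
  have hXint : ∀ z : Vertex d,
      Integrable (fun ω => passageTime (fun e => t e ω) z (z + τ)) ℙ :=
    fun z => (hX2 z).integrable one_le_two
  set ET : ℝ := ∫ ω, passageTime (fun e => t e ω) 0 (0 + τ) ∂ℙ with hETdef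
  set ET2 : ℝ := ∫ ω, (passageTime (fun e => t e ω) 0 (0 + τ)) ^ 2 ∂ℙ with hET2def
  -- identification of Tn and Fn
  have hT : Tn t n = fun ω => passageTime (fun e => t e ω) 0 (0 + τ) := by
    funext ω
    rw [Tn, zero_add]
  have hFn : Fn t n = fun ω =>
      c * ∑ z ∈ B, passageTime (fun e => t e ω) z (z + τ) := rfl
  -- variance of Tn
  have hTvar : variance (Tn t n) ℙ = ET2 - ET ^ 2 := by
    rw [hT]
    have h := variance_eq_sub (μ := ℙ) (X := fun ω => passageTime (fun e => t e ω) 0 (0 + τ))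
      (hX2 0)
    exact h
  -- mean of Fn
  have hFmean : ∫ ω, Fn t n ω ∂ℙ = ET := by
    rw [hFn]
    rw [integral_const_mul]
    rw [integral_finset_sum B fun z _ => hXint z]
    rw [Finset.sum_congr rfl fun z _ => integral_X_eq hmeas ht2 hiid hdist hnonneg hf z]
    rw [Finset.sum_const, nsmul_eq_mul, hcdef, ← hETdef, ← mul_assoc,
      inv_mul_cancel₀ hNr, one_mul]
  -- second moment of Fn
  have hFsq : ∫ ω, (Fn t n ω) ^ 2 ∂ℙ
      = c ^ 2 * ∑ z ∈ B, ∑ w ∈ B, ∫ ω, passageTime (fun e => t e ω) z (z + τ)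
          * passageTime (fun e => t e ω) w (w + τ) ∂ℙ := by
    have hptwise : (fun ω => (Fn t n ω) ^ 2) = fun ω =>
        c ^ 2 * ∑ z ∈ B, ∑ w ∈ B, passageTime (fun e => t e ω) z (z + τ)
          * passageTime (fun e => t e ω) w (w + τ) := by
      funext ω
      rw [hFn]
      rw [mul_pow, pow_two (∑ z ∈ B, passageTime (fun e => t e ω) z (z + τ)),
        Finset.sum_mul_sum]
    rw [hptwise, integral_const_mul]
    rw [integral_finset_sum B fun z _ => integrable_finset_sum B
      fun w _ => memLp_mul_integrable (hX2 z) (hX2 w)]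
    congr 1
    apply Finset.sum_congr rfl
    intro z _
    rw [integral_finset_sum B fun w _ => memLp_mul_integrable (hX2 z) (hX2 w)]
  -- Fn is in L²
  have hFmem : MemLp (Fn t n) 2 ℙ := by
    rw [hFn]
    have := (memLp_finset_sum' B fun z (_ : z ∈ B) =>
      hX2 z).const_mul c
    simpa [Finset.sum_apply] using this
  have hFvar : variance (Fn t n) ℙ
      = c ^ 2 * (∑ z ∈ B, ∑ w ∈ B, ∫ ω, passageTime (fun e => t e ω) z (z + τ)
          * passageTime (fun e => t e ω) w (w + τ) ∂ℙ) - ET ^ 2 := by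
    have h := variance_eq_sub (μ := ℙ) (X := Fn t n) hFmem
    rw [h]
    have h1 : 𝔼[Fn t n ^ 2] = ∫ ω, (Fn t n ω) ^ 2 ∂ℙ := rfl
    have h2 : 𝔼[Fn t n] = ∫ ω, Fn t n ω ∂ℙ := rfl
    rw [h1, h2, hFsq, hFmean]
  -- symmetrization identity
  set D : Vertex d → Vertex d → ℝ := fun z w =>
    ∫ ω, (passageTime (fun e => t e ω) z (z + τ)
      - passageTime (fun e => t e ω) w (w + τ)) ^ 2 ∂ℙ with hDdef
  have hXsq : ∀ z : Vertex d, ∫ ω, (passageTime (fun e => t e ω) z (z + τ)) ^ 2 ∂ℙ = ET2 :=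
    fun z => integral_X_sq_eq hmeas ht2 hiid hdist hnonneg hf z
  have hPD : ∀ z w : Vertex d,
      ∫ ω, passageTime (fun e => t e ω) z (z + τ)
        * passageTime (fun e => t e ω) w (w + τ) ∂ℙ = ET2 - D z w / 2 := by
    intro z w
    have hi1 : Integrable (fun ω => (passageTime (fun e => t e ω) z (z + τ)) ^ 2
        + (passageTime (fun e => t e ω) w (w + τ)) ^ 2) ℙ :=
      (hX2 z).integrable_sq.add (hX2 w).integrable_sq
    have hi2 : Integrable (fun ω => 2 * (passageTime (fun e => t e ω) z (z + τ)
        * passageTime (fun e => t e ω) w (w + τ))) ℙ :=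
      (memLp_mul_integrable (hX2 z) (hX2 w)).const_mul 2
    have hD : D z w = ET2 + ET2 - 2 * ∫ ω, passageTime (fun e => t e ω) z (z + τ)
        * passageTime (fun e => t e ω) w (w + τ) ∂ℙ := by
      have hstep : D z w = ∫ ω, ((passageTime (fun e => t e ω) z (z + τ)) ^ 2
          + (passageTime (fun e => t e ω) w (w + τ)) ^ 2)
          - 2 * (passageTime (fun e => t e ω) z (z + τ)
            * passageTime (fun e => t e ω) w (w + τ)) ∂ℙ := by
        rw [hDdef]
        exact integral_congr_ae (Filter.Eventually.of_forall fun ω => by ring)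
      rw [hstep, integral_sub hi1 hi2,
        integral_add (hX2 z).integrable_sq (hX2 w).integrable_sq,
        integral_const_mul, hXsq z, hXsq w]
    rw [hD]
    ring
  -- difference of variances
  have hdiff : variance (Tn t n) ℙ - variance (Fn t n) ℙ
      = c ^ 2 / 2 * ∑ z ∈ B, ∑ w ∈ B, D z w := by
    rw [hTvar, hFvar]
    rw [Finset.sum_congr rfl fun z _ => Finset.sum_congr rfl fun w _ => hPD z w]
    have h1 : ∀ z, ∑ w ∈ B, (ET2 - D z w / 2) = (N : ℝ) * ET2 - (∑ w ∈ B, D z w) / 2 := by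
      intro z
      rw [Finset.sum_sub_distrib, Finset.sum_const, ← hNdef, nsmul_eq_mul, ← Finset.sum_div]
    have hsum : ∑ z ∈ B, ∑ w ∈ B, (ET2 - D z w / 2)
        = (N : ℝ) ^ 2 * ET2 - (∑ z ∈ B, ∑ w ∈ B, D z w) / 2 := by
      rw [Finset.sum_congr rfl fun z _ => h1 z, Finset.sum_sub_distrib, Finset.sum_const,
        ← hNdef, nsmul_eq_mul]
      rw [show (∑ z ∈ B, (∑ w ∈ B, D z w) / 2) = (∑ z ∈ B, ∑ w ∈ B, D z w) / 2 from
        (Finset.sum_div _ _ _).symm]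
      ring
    rw [hsum]
    have hc2 : c ^ 2 * (N : ℝ) ^ 2 = 1 := by
      rw [hcdef, ← mul_pow, inv_mul_cancel₀ hNr, one_pow]
    linear_combination (-ET2) * hc2
  -- bounds on D
  have hD0 : ∀ z w : Vertex d, 0 ≤ D z w := by
    intro z w
    rw [hDdef]
    exact integral_nonneg fun ω => sq_nonneg _
  have hDle : ∀ z ∈ B, ∀ w ∈ B, D z w ≤ 64 * (m : ℝ) ^ 2 * σ2 := by
    intro z hz w hw
    rw [hBdef] at hz hw
    have hb := integral_sq_diff_le hmeas ht2 hdist hnonneg hf hσ hσ2_0 z w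
    have hnat : (pathEdges z (stepsTo (w - z)) ++ pathEdges (w + τ) (stepsTo (z - w))
        ++ pathEdges w (stepsTo (z - w)) ++ pathEdges (z + τ) (stepsTo (w - z))).length ≤ 8 * m := by
      simp only [List.length_append, length_pathEdges, length_stepsTo]
      have h1 := sum_natAbs_sub_le hz hw
      have h2 := sum_natAbs_sub_le hw hz
      omega
    have hlen : (((pathEdges z (stepsTo (w - z)) ++ pathEdges (w + τ) (stepsTo (z - w))
        ++ pathEdges w (stepsTo (z - w)) ++ pathEdges (z + τ) (stepsTo (w - z))).length : ℕ) : ℝ) ≤ 8 * (m : ℝ) := by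
      exact_mod_cast hnat
    have hsq : (((pathEdges z (stepsTo (w - z)) ++ pathEdges (w + τ) (stepsTo (z - w))
        ++ pathEdges w (stepsTo (z - w)) ++ pathEdges (z + τ) (stepsTo (w - z))).length : ℕ) : ℝ) ^ 2 * σ2 ≤ 64 * (m : ℝ) ^ 2 * σ2 := by
      have hp := pow_le_pow_left₀ (Nat.cast_nonneg _) hlen 2
      nlinarith [hσ2_0, hp]
    rw [hDdef]
    exact le_trans hb hsq
  have hsumD : ∑ z ∈ B, ∑ w ∈ B, D z w ≤ (N : ℝ) ^ 2 * (64 * (m : ℝ) ^ 2 * σ2) := by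
    have hstep : ∀ z ∈ B, ∑ w ∈ B, D z w ≤ (N : ℝ) * (64 * (m : ℝ) ^ 2 * σ2) := by
      intro z hz
      calc ∑ w ∈ B, D z w ≤ ∑ _w ∈ B, 64 * (m : ℝ) ^ 2 * σ2 :=
            Finset.sum_le_sum fun w hw => hDle z hz w hw
        _ = (N : ℝ) * (64 * (m : ℝ) ^ 2 * σ2) := by
            rw [Finset.sum_const, ← hNdef, nsmul_eq_mul]
    calc ∑ z ∈ B, ∑ w ∈ B, D z w ≤ ∑ _z ∈ B, (N : ℝ) * (64 * (m : ℝ) ^ 2 * σ2) :=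
          Finset.sum_le_sum hstep
      _ = (N : ℝ) * ((N : ℝ) * (64 * (m : ℝ) ^ 2 * σ2)) := by
          rw [Finset.sum_const, ← hNdef, nsmul_eq_mul]
      _ = (N : ℝ) ^ 2 * (64 * (m : ℝ) ^ 2 * σ2) := by ring
  have hc2 : c ^ 2 * (N : ℝ) ^ 2 = 1 := by
    rw [hcdef, ← mul_pow, inv_mul_cancel₀ hNr, one_pow]
  have hdiff_nonneg : 0 ≤ variance (Tn t n) ℙ - variance (Fn t n) ℙ := by
    rw [hdiff]
    exact mul_nonneg (by positivity)
      (Finset.sum_nonneg fun z _ => Finset.sum_nonneg fun w _ => hD0 z w)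
  have hdiff_le : variance (Tn t n) ℙ - variance (Fn t n) ℙ ≤ 32 * (m : ℝ) ^ 2 * σ2 := by
    rw [hdiff]
    calc c ^ 2 / 2 * ∑ z ∈ B, ∑ w ∈ B, D z w
        ≤ c ^ 2 / 2 * ((N : ℝ) ^ 2 * (64 * (m : ℝ) ^ 2 * σ2)) :=
          mul_le_mul_of_nonneg_left hsumD (by positivity)
      _ = (c ^ 2 * (N : ℝ) ^ 2) * (32 * (m : ℝ) ^ 2 * σ2) := by ring
      _ = 32 * (m : ℝ) ^ 2 * σ2 := by rw [hc2, one_mul]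
  -- rpow arithmetic
  have hx1 : (1 : ℝ) ≤ (n : ℝ) ^ ((1:ℝ)/4) := by
    have h := Real.rpow_le_rpow (zero_le_one) (by exact_mod_cast hn : (1:ℝ) ≤ (n:ℝ))
      (by norm_num : (0:ℝ) ≤ (1:ℝ)/4)
    rwa [Real.one_rpow] at h
  have hm1 : (m : ℝ) ≤ 2 * (n : ℝ) ^ ((1:ℝ)/4) := by
    have h := Nat.ceil_lt_add_one (le_trans zero_le_one hx1)
    have hmeq : (m : ℝ) = (⌈(n : ℝ) ^ ((1:ℝ)/4)⌉₊ : ℝ) := by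
      rw [hmdef]
    rw [hmeq]
    linarith
  have hmsq : (m : ℝ) ^ 2 ≤ 4 * (n : ℝ) ^ ((1:ℝ)/2) := by
    have h2 : ((n : ℝ) ^ ((1:ℝ)/4)) ^ 2 = (n : ℝ) ^ ((1:ℝ)/2) := by
      rw [← Real.rpow_natCast ((n : ℝ) ^ ((1:ℝ)/4)) 2, ← Real.rpow_mul (Nat.cast_nonneg n)]
      norm_num
    have hmul := mul_le_mul hm1 hm1 (Nat.cast_nonneg m) (by positivity)
    nlinarith [hmul, h2]
  have h34 : (n : ℝ) ^ ((1:ℝ)/2) ≤ (n : ℝ) ^ ((3:ℝ)/4) :=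
    Real.rpow_le_rpow_of_exponent_le (by exact_mod_cast hn) (by norm_num)
  have hn34 : 0 ≤ (n : ℝ) ^ ((3:ℝ)/4) := Real.rpow_nonneg (Nat.cast_nonneg n) _
  have hfinal : 32 * (m : ℝ) ^ 2 * σ2 ≤ (128 * σ2 + 1) * (n : ℝ) ^ ((3:ℝ)/4) := by
    nlinarith [mul_le_mul_of_nonneg_right hmsq hσ2_0,
      mul_le_mul_of_nonneg_left h34 (by positivity : (0:ℝ) ≤ 128 * σ2), hn34, hσ2_0]
  rw [abs_of_nonneg hdiff_nonneg]
  have : (3:ℝ)/4 = (3/4 : ℝ) := by norm_num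
  calc variance (Tn t n) ℙ - variance (Fn t n) ℙ ≤ 32 * (m : ℝ) ^ 2 * σ2 := hdiff_le
    _ ≤ (128 * σ2 + 1) * (n : ℝ) ^ ((3:ℝ)/4) := hfinal
    _ = (128 * σ2 + 1) * (n : ℝ) ^ ((3/4 : ℝ)) := by norm_num

end
end
end FPP
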